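/- Key lower bound in the ℓ¹ counterexample: let m ∈ ℕ, let ε_1, …, ε_m be independent Rademacher variables, and for i = 1, …, m set v_i := 2^{−2^i} ∑_{k=1}^{2^{2^i}} e_k ∈ ℓ¹. Then for any real scalars α_1, …, α_m, E‖∑_{i=1}^m ε_i α_i v_i‖_{ℓ¹} ≥ ∑_{i=1}^m (1 − 2^{−2^{i-1}})|α_i| − ∑_{i=1}^m 2^{−2^{i-1}}|α_i| ≥ ∑_{i=1}^m |α_i| − 2∑_{i=1}^m 2^{−2^{i-1}}|α_i|. In particular, with α_i = 1/(i+1), E‖∑_{i=1}^m ε_i α_i v_i‖_{ℓ¹} ≳ log m. -/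

import Mathlib

noncomputable section

instance : Fact ((1 : ENNReal) ≤ 1) := ⟨le_rfl⟩

/-- The sequence space ℓ¹. -/
abbrev EllOne : Type := lp (fun _ : ℕ => ℝ) 1

/-- Expectation `E‖∑_{j} ε_j x_j‖` over independent random signs. -/
def radAvg {X : Type*} [NormedAddCommGroup X]
    (N : ℕ) (x : Fin N → X) : ℝ :=
  ((2 : ℝ) ^ N)⁻¹ *
    ∑ σ : Fin N → Bool, ‖∑ j, (if σ j then x j else - x j)‖

/-- `v_i = 2^{−2^i} ∑_{k=1}^{2^{2^i}} e_k ∈ ℓ¹`: the normalized indicator of the first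
`2^{2^i}` coordinates. -/
def vBlock (i : ℕ) : EllOne :=
  ((2 : ℝ) ^ (2 ^ i))⁻¹ • ∑ k ∈ Finset.range (2 ^ 2 ^ i), lp.single 1 k (1 : ℝ)

set_option linter.unreachableTactic false
set_option linter.unusedTactic false

lemma vBlock_apply (i k : ℕ) :
    (vBlock i : ∀ _ : ℕ, ℝ) k = if k < 2 ^ 2 ^ i then ((2 : ℝ) ^ (2 ^ i))⁻¹ else 0 := by
  rw [vBlock, lp.coeFn_smul]
  simp only [Pi.smul_apply, lp.coeFn_sum, Finset.sum_apply, lp.single_apply,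
    eq_rec_constant, dite_eq_ite, Finset.sum_ite_eq' (Finset.range (2 ^ 2 ^ i)) k,
    Finset.mem_range]
  split <;> simp <;> omega

lemma sum_abs_le_norm (f : EllOne) (s : Finset ℕ) : ∑ k ∈ s, |f k| ≤ ‖f‖ := by
  have := lp.sum_rpow_le_norm_rpow (p := 1) (E := fun _ : ℕ => ℝ) (by simp) f s
  simpa [Real.norm_eq_abs] using this

lemma le_radAvg {X : Type*} [NormedAddCommGroup X] (m : ℕ) (x : Fin m → X) (L : ℝ)
    (h : ∀ σ : Fin m → Bool, L ≤ ‖∑ j, (if σ j then x j else - x j)‖) :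
    L ≤ radAvg m x := by
  rw [radAvg, inv_mul_eq_div, le_div_iff₀ (by positivity)]
  calc L * 2 ^ m = ∑ _σ : Fin m → Bool, L := by
        simp [Finset.sum_const, Finset.card_univ, mul_comm]
    _ ≤ _ := Finset.sum_le_sum fun σ _ => h σ

lemma pow_pow_mono {a b : ℕ} (h : a ≤ b) : (2:ℕ) ^ 2 ^ a ≤ 2 ^ 2 ^ b :=
  Nat.pow_le_pow_right (by norm_num) (Nat.pow_le_pow_right (by norm_num) h)

lemma pow_pow_succ (i : ℕ) : (2:ℝ) ^ 2 ^ (i+1) = ((2:ℝ) ^ 2 ^ i) ^ 2 := by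
  rw [pow_succ, pow_mul]

lemma core_arith (m : ℕ) (a : ℕ → ℝ) (ha : ∀ i, 0 ≤ a i) (t : ℕ → ℝ)
    (ht : ∀ i, i < m → ((2:ℝ)^(2^(i+1)))⁻¹ * a i
        - ∑ j ∈ Finset.Ico (i+1) m, ((2:ℝ)^(2^(j+1)))⁻¹ * a j ≤ |t i|) :
    ∑ i ∈ Finset.range m, (1 - ((2:ℝ)^(2^i))⁻¹) * a i
        - ∑ i ∈ Finset.range m, ((2:ℝ)^(2^i))⁻¹ * a i
      ≤ ∑ i ∈ Finset.range m, ((2:ℝ)^(2^(i+1)) - 2^(2^i)) * |t i| := by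
  have hw : ∀ i : ℕ, (0:ℝ) ≤ (2:ℝ)^(2^(i+1)) - 2^(2^i) := by
    intro i
    have : (2:ℝ)^(2^i) ≤ 2^(2^(i+1)) := by
      apply pow_le_pow_right₀ one_le_two (Nat.pow_le_pow_right (by norm_num) (Nat.le_succ i))
    linarith
  have step1 : ∑ i ∈ Finset.range m,
      ((2:ℝ)^(2^(i+1)) - 2^(2^i)) * (((2:ℝ)^(2^(i+1)))⁻¹ * a i
        - ∑ j ∈ Finset.Ico (i+1) m, ((2:ℝ)^(2^(j+1)))⁻¹ * a j)
      ≤ ∑ i ∈ Finset.range m, ((2:ℝ)^(2^(i+1)) - 2^(2^i)) * |t i| := by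
    refine Finset.sum_le_sum fun i hi => ?_
    exact mul_le_mul_of_nonneg_left (ht i (Finset.mem_range.mp hi)) (hw i)
  refine le_trans ?_ step1
  rw [show (∑ i ∈ Finset.range m,
      ((2:ℝ)^(2^(i+1)) - 2^(2^i)) * (((2:ℝ)^(2^(i+1)))⁻¹ * a i
        - ∑ j ∈ Finset.Ico (i+1) m, ((2:ℝ)^(2^(j+1)))⁻¹ * a j))
    = ∑ i ∈ Finset.range m, ((2:ℝ)^(2^(i+1)) - 2^(2^i)) * (((2:ℝ)^(2^(i+1)))⁻¹ * a i)
      - ∑ i ∈ Finset.range m, ∑ j ∈ Finset.Ico (i+1) m,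
          ((2:ℝ)^(2^(i+1)) - 2^(2^i)) * (((2:ℝ)^(2^(j+1)))⁻¹ * a j) from by
    rw [← Finset.sum_sub_distrib]
    exact Finset.sum_congr rfl fun i _ => by rw [mul_sub, Finset.mul_sum]]
  have hpos : ∀ i : ℕ, (0:ℝ) < (2:ℝ)^(2^i) := fun i => by positivity
  have e1 : ∑ i ∈ Finset.range m, ((2:ℝ)^(2^(i+1)) - 2^(2^i)) * (((2:ℝ)^(2^(i+1)))⁻¹ * a i)
      = ∑ i ∈ Finset.range m, (1 - ((2:ℝ)^(2^i))⁻¹) * a i := by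
    refine Finset.sum_congr rfl fun i _ => ?_
    rw [pow_pow_succ]
    field_simp
  rw [e1]
  have e2 : ∑ i ∈ Finset.range m, ∑ j ∈ Finset.Ico (i+1) m,
        ((2:ℝ)^(2^(i+1)) - 2^(2^i)) * (((2:ℝ)^(2^(j+1)))⁻¹ * a j)
      = ∑ j ∈ Finset.range m, ∑ i ∈ Finset.range j,
        ((2:ℝ)^(2^(i+1)) - 2^(2^i)) * (((2:ℝ)^(2^(j+1)))⁻¹ * a j) := by
    refine Finset.sum_comm' ?_
    intro i j
    simp only [Finset.mem_range, Finset.mem_Ico]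
    omega
  have e3 : ∀ j : ℕ, ∑ i ∈ Finset.range j,
        ((2:ℝ)^(2^(i+1)) - 2^(2^i)) * (((2:ℝ)^(2^(j+1)))⁻¹ * a j)
      = ((2:ℝ)^(2^j) - 2) * (((2:ℝ)^(2^(j+1)))⁻¹ * a j) := by
    intro j
    rw [← Finset.sum_mul, Finset.sum_range_sub (fun i => (2:ℝ)^(2^i))]
    norm_num
  have e4 : ∑ i ∈ Finset.range m, ∑ j ∈ Finset.Ico (i+1) m,
        ((2:ℝ)^(2^(i+1)) - 2^(2^i)) * (((2:ℝ)^(2^(j+1)))⁻¹ * a j)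
      ≤ ∑ j ∈ Finset.range m, ((2:ℝ)^(2^j))⁻¹ * a j := by
    rw [e2]
    refine Finset.sum_le_sum fun j _ => ?_
    rw [e3 j]
    have h2 : ((2:ℝ)^(2^j) - 2) * (((2:ℝ)^(2^(j+1)))⁻¹ * a j)
        ≤ (2:ℝ)^(2^j) * (((2:ℝ)^(2^(j+1)))⁻¹ * a j) := by
      apply mul_le_mul_of_nonneg_right (by linarith) (mul_nonneg (by positivity) (ha j))
    refine h2.trans (le_of_eq ?_)
    rw [pow_pow_succ]
    field_simp
  linarith

lemma norm_lower (m : ℕ) (α : Fin m → ℝ) (σ : Fin m → Bool) :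
    ∑ i : Fin m, (1 - ((2:ℝ)^(2^(i:ℕ)))⁻¹) * |α i|
        - ∑ i : Fin m, ((2:ℝ)^(2^(i:ℕ)))⁻¹ * |α i|
      ≤ ‖∑ j, (if σ j then α j • vBlock ((j:ℕ)+1) else -(α j • vBlock ((j:ℕ)+1)))‖ := by
  set s' : ℕ → ℝ := fun n =>
    if h : n < m then (if σ ⟨n, h⟩ then α ⟨n, h⟩ else -α ⟨n, h⟩) else 0 with hs'
  set a : ℕ → ℝ := fun n => if h : n < m then |α ⟨n, h⟩| else 0 with ha'
  have ha : ∀ n, 0 ≤ a n := by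
    intro n; rw [ha']; dsimp only; split <;> simp [abs_nonneg]
  have habs : ∀ n, |s' n| = a n := by
    intro n; rw [hs', ha']; dsimp only
    split
    · split <;> simp [abs_neg]
    · simp
  set x : EllOne :=
    ∑ j, (if σ j then α j • vBlock ((j:ℕ)+1) else -(α j • vBlock ((j:ℕ)+1))) with hxdef
  have hx : ∀ k : ℕ, (x : ∀ _ : ℕ, ℝ) k
      = ∑ j ∈ Finset.range m,
          s' j * (if k < 2 ^ 2 ^ (j+1) then ((2:ℝ) ^ (2 ^ (j+1)))⁻¹ else 0) := by
    intro k
    rw [hxdef, lp.coeFn_sum, Finset.sum_apply]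
    rw [← Fin.sum_univ_eq_sum_range
      (fun n => s' n * (if k < 2 ^ 2 ^ (n+1) then ((2:ℝ) ^ (2 ^ (n+1)))⁻¹ else 0)) m]
    refine Finset.sum_congr rfl fun j _ => ?_
    have hj : (j : ℕ) < m := j.isLt
    rw [hs']; dsimp only
    rw [dif_pos hj]
    cases hσ : σ j
    · rw [if_neg (by simp [hσ]), if_neg (by simp [Fin.eta, hσ])]
      rw [lp.coeFn_neg, Pi.neg_apply, lp.coeFn_smul, Pi.smul_apply, vBlock_apply]
      simp only [Fin.eta, smul_eq_mul]
      split <;> ring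
    · rw [if_pos (by simp [hσ]), if_pos (by simp [Fin.eta, hσ])]
      rw [lp.coeFn_smul, Pi.smul_apply, vBlock_apply]
      simp only [Fin.eta, smul_eq_mul]
      try (split <;> ring)
  set t : ℕ → ℝ := fun i => ∑ j ∈ Finset.Ico i m, s' j * ((2:ℝ) ^ (2 ^ (j+1)))⁻¹ with htdef
  have hfilter : ∀ i : ℕ, Finset.Ico i m = (Finset.range m).filter (fun j => i ≤ j) := by
    intro i; ext j; simp [Finset.mem_Ico, Finset.mem_range, Finset.mem_filter]; omega
  have hblock : ∀ i, i < m → ∀ k ∈ Finset.Ico (2 ^ 2 ^ i) (2 ^ 2 ^ (i+1)),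
      (x : ∀ _ : ℕ, ℝ) k = t i := by
    intro i him k hk
    rw [Finset.mem_Ico] at hk
    rw [hx k, htdef]; dsimp only
    rw [hfilter i, Finset.sum_filter]
    refine Finset.sum_congr rfl fun j _ => ?_
    by_cases hij : i ≤ j
    · rw [if_pos hij, if_pos]
      exact lt_of_lt_of_le hk.2 (pow_pow_mono (by omega))
    · rw [if_neg hij, if_neg, mul_zero]
      have : (2:ℕ) ^ 2 ^ (j+1) ≤ 2 ^ 2 ^ i := pow_pow_mono (by omega)
      omega
  have ht : ∀ i, i < m → ((2:ℝ)^(2^(i+1)))⁻¹ * a i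
      - ∑ j ∈ Finset.Ico (i+1) m, ((2:ℝ)^(2^(j+1)))⁻¹ * a j ≤ |t i| := by
    intro i him
    have hsplit : t i = s' i * ((2:ℝ) ^ (2 ^ (i+1)))⁻¹
        + ∑ j ∈ Finset.Ico (i+1) m, s' j * ((2:ℝ) ^ (2 ^ (j+1)))⁻¹ := by
      rw [htdef]; dsimp only
      exact Finset.sum_eq_sum_Ico_succ_bot him _
    have h1 : |s' i * ((2:ℝ) ^ (2 ^ (i+1)))⁻¹| = ((2:ℝ)^(2^(i+1)))⁻¹ * a i := by
      rw [abs_mul, habs, abs_of_nonneg (by positivity)]; ring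
    have h2 : |∑ j ∈ Finset.Ico (i+1) m, s' j * ((2:ℝ) ^ (2 ^ (j+1)))⁻¹|
        ≤ ∑ j ∈ Finset.Ico (i+1) m, ((2:ℝ)^(2^(j+1)))⁻¹ * a j := by
      refine (Finset.abs_sum_le_sum_abs _ _).trans (Finset.sum_le_sum fun j _ => ?_)
      rw [abs_mul, habs, abs_of_nonneg (by positivity)]
      exact le_of_eq (mul_comm _ _)
    have h3 : |s' i * ((2:ℝ) ^ (2 ^ (i+1)))⁻¹| ≤ |t i|
        + |∑ j ∈ Finset.Ico (i+1) m, s' j * ((2:ℝ) ^ (2 ^ (j+1)))⁻¹| := by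
      calc |s' i * ((2:ℝ) ^ (2 ^ (i+1)))⁻¹|
          = |t i - ∑ j ∈ Finset.Ico (i+1) m, s' j * ((2:ℝ) ^ (2 ^ (j+1)))⁻¹| := by
            rw [hsplit]; congr 1; ring
        _ ≤ _ := abs_sub _ _
    linarith
  have hfa : ∀ (g : ℕ → ℝ), ∑ i : Fin m, g i * |α i| = ∑ i ∈ Finset.range m, g i * a i := by
    intro g
    rw [← Fin.sum_univ_eq_sum_range (fun n => g n * a n) m]
    refine Finset.sum_congr rfl fun i _ => ?_
    rw [ha']; dsimp only
    rw [dif_pos i.isLt, Fin.eta]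
  have key := core_arith m a ha t ht
  calc ∑ i : Fin m, (1 - ((2:ℝ)^(2^(i:ℕ)))⁻¹) * |α i|
        - ∑ i : Fin m, ((2:ℝ)^(2^(i:ℕ)))⁻¹ * |α i|
      = ∑ i ∈ Finset.range m, (1 - ((2:ℝ)^(2^i))⁻¹) * a i
        - ∑ i ∈ Finset.range m, ((2:ℝ)^(2^i))⁻¹ * a i := by
        rw [hfa (fun n => 1 - ((2:ℝ)^(2^n))⁻¹), hfa (fun n => ((2:ℝ)^(2^n))⁻¹)]
    _ ≤ ∑ i ∈ Finset.range m, ((2:ℝ)^(2^(i+1)) - 2^(2^i)) * |t i| := key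
    _ = ∑ i ∈ Finset.range m, ∑ k ∈ Finset.Ico (2 ^ 2 ^ i) (2 ^ 2 ^ (i+1)),
          |(x : ∀ _ : ℕ, ℝ) k| := by
        refine Finset.sum_congr rfl fun i hi => ?_
        rw [Finset.mem_range] at hi
        rw [Finset.sum_congr rfl (fun k hk => by rw [hblock i hi k hk]),
          Finset.sum_const, Nat.card_Ico, nsmul_eq_mul]
        rw [Nat.cast_sub (pow_pow_mono (Nat.le_succ i))]
        push_cast
        simp only [pow_succ, pow_mul]
        try ring
    _ = ∑ k ∈ (Finset.range m).biUnion
          (fun i => Finset.Ico (2 ^ 2 ^ i) (2 ^ 2 ^ (i+1))), |(x : ∀ _ : ℕ, ℝ) k| := by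
        rw [Finset.sum_biUnion]
        intro i _ j _ hij
        refine Finset.disjoint_left.mpr fun k hki hkj => ?_
        rw [Finset.mem_Ico] at hki hkj
        rcases lt_or_gt_of_ne hij with h | h
        · have := pow_pow_mono (show i + 1 ≤ j by omega); omega
        · have := pow_pow_mono (show j + 1 ≤ i by omega); omega
    _ ≤ ‖x‖ := sum_abs_le_norm x _

lemma log_sum (m : ℕ) :
    Real.log m ≤ ∑ i ∈ Finset.range m,
      (if i = 0 then (0:ℝ) else Real.log (i+2) - Real.log i) := by
  rcases Nat.eq_zero_or_pos m with rfl | hm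
  · simp
  have hrw : ∀ i ∈ Finset.range m, (if i = 0 then (0:ℝ) else Real.log (i+2) - Real.log i)
      = (Real.log (i+2) - Real.log i)
        - (if i = 0 then (Real.log (i+2) - Real.log i) else 0) := by
    intro i _; split <;> simp_all
  rw [Finset.sum_congr rfl hrw, Finset.sum_sub_distrib]
  have h0 : ∑ i ∈ Finset.range m, (if i = 0 then (Real.log (i+2) - Real.log i) else 0)
      = Real.log 2 := by
    rw [Finset.sum_ite_eq' (Finset.range m) 0 (fun i => Real.log (i+2) - Real.log i)]
    rw [if_pos (Finset.mem_range.mpr hm)]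
    norm_num
  rw [h0]
  have hsplit : ∑ i ∈ Finset.range m, (Real.log (i+2) - Real.log i)
      = (Real.log (m+1) - Real.log 1) + (Real.log m - Real.log 0) := by
    have e : ∀ i : ℕ, Real.log (i+2) - Real.log i
        = ((fun n : ℕ => Real.log (n+1)) (i+1) - (fun n : ℕ => Real.log (n+1)) i)
          + ((fun n : ℕ => Real.log n) (i+1) - (fun n : ℕ => Real.log n) i) := by
      intro i; push_cast; ring_nf
    rw [Finset.sum_congr rfl (fun i _ => e i), Finset.sum_add_distrib,
      Finset.sum_range_sub (fun n : ℕ => Real.log (n+1)),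
      Finset.sum_range_sub (fun n : ℕ => Real.log n)]
    push_cast; ring
  rw [hsplit]
  simp only [Real.log_one, Real.log_zero]
  have : Real.log 2 ≤ Real.log (m+1) := by
    apply Real.log_le_log (by norm_num)
    have : (1:ℝ) ≤ (m:ℝ) := by exact_mod_cast hm
    linarith
  linarith

lemma term_bound (i : ℕ) :
    (if i = 0 then (0:ℝ) else (1/12) * (Real.log (i+2) - Real.log i))
      ≤ (1 - 2*((2:ℝ)^(2^i))⁻¹) * ((i:ℝ)+2)⁻¹ := by
  rcases Nat.eq_zero_or_pos i with rfl | hi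
  · norm_num
  rw [if_neg (by omega)]
  have hI : (1:ℝ) ≤ (i:ℝ) := by exact_mod_cast hi
  have hIpos : (0:ℝ) < i := by linarith
  have h4 : (4:ℝ) ≤ (2:ℝ)^(2^i) := by
    calc (4:ℝ) = 2^2 := by norm_num
      _ ≤ 2^(2^i) := pow_le_pow_right₀ one_le_two (by
          calc 2 = 2^1 := (pow_one 2).symm
            _ ≤ 2^i := Nat.pow_le_pow_right (by norm_num) hi)
  have hcle : ((2:ℝ)^(2^i))⁻¹ ≤ 1/4 := by
    rw [inv_le_comm₀ (by positivity) (by norm_num)]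
    linarith
  have hcnn : (0:ℝ) ≤ ((2:ℝ)^(2^i))⁻¹ := by positivity
  have hlog : Real.log (i+2) - Real.log i ≤ 2 / i := by
    rw [← Real.log_div (by positivity) (by positivity)]
    have h := Real.log_le_sub_one_of_pos (x := ((i:ℝ)+2)/i) (by positivity)
    have e : ((i:ℝ)+2)/i - 1 = 2/i := by field_simp; ring
    linarith
  have step1 : (1/12) * (Real.log (i+2) - Real.log i) ≤ (1/12) * (2/i) :=
    mul_le_mul_of_nonneg_left hlog (by norm_num)
  have step2 : (1/12) * (2/(i:ℝ)) ≤ (1/2) * ((i:ℝ)+2)⁻¹ := by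
    have e1 : (1/12) * (2/(i:ℝ)) = 1/(6*i) := by ring
    rw [e1, show (1:ℝ)/2 * ((i:ℝ)+2)⁻¹ = 1/(2*((i:ℝ)+2)) from by field_simp,
      div_le_div_iff₀ (by positivity) (by positivity)]
    linarith
  have step3 : (1/2) * ((i:ℝ)+2)⁻¹ ≤ (1 - 2*((2:ℝ)^(2^i))⁻¹) * ((i:ℝ)+2)⁻¹ :=
    mul_le_mul_of_nonneg_right (by linarith) (by positivity)
  linarith

/-- Key lower bound in the ℓ¹ counterexample: for `v_i := 2^{−2^i} ∑_{k=1}^{2^{2^i}} e_k`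
and any real scalars `α_1, …, α_m`,
`E‖∑ ε_i α_i v_i‖ ≥ ∑ (1 − 2^{−2^{i-1}})|α_i| − ∑ 2^{−2^{i-1}}|α_i| ≥ ∑|α_i| − 2∑ 2^{−2^{i-1}}|α_i|`,
and in particular with `α_i = 1/(i+1)` the expectation is `≳ log m`. -/
theorem ellOne_block_lower_bound :
    (∀ (m : ℕ) (α : Fin m → ℝ),
      (∑ i : Fin m, |α i| - 2 * ∑ i : Fin m, ((2 : ℝ) ^ (2 ^ (i : ℕ)))⁻¹ * |α i|
          ≤ ∑ i : Fin m, (1 - ((2 : ℝ) ^ (2 ^ (i : ℕ)))⁻¹) * |α i|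
              - ∑ i : Fin m, ((2 : ℝ) ^ (2 ^ (i : ℕ)))⁻¹ * |α i|) ∧
      (∑ i : Fin m, (1 - ((2 : ℝ) ^ (2 ^ (i : ℕ)))⁻¹) * |α i|
          - ∑ i : Fin m, ((2 : ℝ) ^ (2 ^ (i : ℕ)))⁻¹ * |α i|
        ≤ radAvg m (fun i => α i • vBlock ((i : ℕ) + 1)))) ∧
    (∃ c : ℝ, 0 < c ∧ ∀ m : ℕ,
      c * Real.log m ≤ radAvg m (fun i : Fin m => (((i : ℕ) + 2 : ℝ))⁻¹ • vBlock ((i : ℕ) + 1))) := by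
  have part1 : ∀ (m : ℕ) (α : Fin m → ℝ),
      (∑ i : Fin m, |α i| - 2 * ∑ i : Fin m, ((2 : ℝ) ^ (2 ^ (i : ℕ)))⁻¹ * |α i|
          ≤ ∑ i : Fin m, (1 - ((2 : ℝ) ^ (2 ^ (i : ℕ)))⁻¹) * |α i|
              - ∑ i : Fin m, ((2 : ℝ) ^ (2 ^ (i : ℕ)))⁻¹ * |α i|) ∧
      (∑ i : Fin m, (1 - ((2 : ℝ) ^ (2 ^ (i : ℕ)))⁻¹) * |α i|
          - ∑ i : Fin m, ((2 : ℝ) ^ (2 ^ (i : ℕ)))⁻¹ * |α i|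
        ≤ radAvg m (fun i => α i • vBlock ((i : ℕ) + 1))) := by
    intro m α
    constructor
    · have e : ∑ i : Fin m, (1 - ((2 : ℝ) ^ (2 ^ (i : ℕ)))⁻¹) * |α i|
          = ∑ i : Fin m, |α i| - ∑ i : Fin m, ((2 : ℝ) ^ (2 ^ (i : ℕ)))⁻¹ * |α i| := by
        rw [← Finset.sum_sub_distrib]
        exact Finset.sum_congr rfl fun i _ => by ring
      rw [e]
      linarith
    · exact le_radAvg m _ _ (fun σ => norm_lower m α σ)
  refine ⟨part1, 1/12, by norm_num, fun m => ?_⟩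
  have h1 : (1/12) * Real.log m
      ≤ ∑ i ∈ Finset.range m, (if i = 0 then (0:ℝ) else (1/12) * (Real.log (i+2) - Real.log i)) := by
    have := log_sum m
    have e : ∑ i ∈ Finset.range m, (if i = 0 then (0:ℝ) else (1/12) * (Real.log (i+2) - Real.log i))
        = (1/12) * ∑ i ∈ Finset.range m, (if i = 0 then (0:ℝ) else Real.log (i+2) - Real.log i) := by
      rw [Finset.mul_sum]
      exact Finset.sum_congr rfl fun i _ => by split <;> ring
    rw [e]
    linarith
  have h2 : ∑ i ∈ Finset.range m, (if i = 0 then (0:ℝ) else (1/12) * (Real.log (i+2) - Real.log i))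
      ≤ ∑ i ∈ Finset.range m, (1 - 2*((2:ℝ)^(2^i))⁻¹) * ((i:ℝ)+2)⁻¹ :=
    Finset.sum_le_sum fun i _ => term_bound i
  set α : Fin m → ℝ := fun i => (((i : ℕ) + 2 : ℝ))⁻¹ with hα
  have habs : ∀ i : Fin m, |α i| = (((i : ℕ) + 2 : ℝ))⁻¹ := fun i =>
    abs_of_pos (by positivity)
  have h3 : ∑ i ∈ Finset.range m, (1 - 2*((2:ℝ)^(2^i))⁻¹) * ((i:ℝ)+2)⁻¹
      = ∑ i : Fin m, |α i| - 2 * ∑ i : Fin m, ((2 : ℝ) ^ (2 ^ (i : ℕ)))⁻¹ * |α i| := by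
    rw [← Fin.sum_univ_eq_sum_range (fun n => (1 - 2*((2:ℝ)^(2^n))⁻¹) * ((n:ℝ)+2)⁻¹) m]
    rw [Finset.mul_sum, ← Finset.sum_sub_distrib]
    refine Finset.sum_congr rfl fun i _ => ?_
    rw [habs i]
    ring
  have ⟨p1a, p1b⟩ := part1 m α
  calc (1/12) * Real.log m
      ≤ ∑ i : Fin m, |α i| - 2 * ∑ i : Fin m, ((2 : ℝ) ^ (2 ^ (i : ℕ)))⁻¹ * |α i| := by
        rw [← h3]; linarith
    _ ≤ _ := p1a.trans p1b
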